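/- Let A_1, …, A_m be a finite measurable partition of M into pairwise disjoint sets, and suppose that for each j there is a constant d_j ∈ ℝ^n with d(X, τ) = d_j for all X ∈ S(A_j). Then for every t ∈ ℝ and all components a, b ∈ {1, …, n}: ∑_{j=1}^m [ d_{j,a} T_t(A_j)_b + T_t(A_j)_a d_{j,b} + ν(A_j) d_{j,a} d_{j,b} ] = ∫_M d_a(X, t+τ) d_b(X, t+τ) dν(X) − ∫_M d_a(X, t) d_b(X, t) dν(X). (This exact identity for the growth of the second moment of the displacement is the finite-time content of the fundamental sum rule Eq. (sumrule*) of the paper.) -/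

import Mathlib

open MeasureTheory

/-- exact identity for the growth of the second moment of the
displacement (finite-time content of the fundamental sum rule):
`∑_j [ d_{j,a} T_t(A_j)_b + T_t(A_j)_a d_{j,b} + ν(A_j) d_{j,a} d_{j,b} ]
  = ∫_M d_a(X,t+τ) d_b(X,t+τ) dν − ∫_M d_a(X,t) d_b(X,t) dν`,
where `T_t(A)_a = ∫_A d_a(X,t) dν`. -/
theorem second_moment_growth_identity {M : Type*} [MeasurableSpace M]
    (ν : Measure M) [IsFiniteMeasure ν] (hν : 0 < ν Set.univ)
    {n : ℕ} (hn : 1 ≤ n) (d : M → ℝ → Fin n → ℝ)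
    (hdmeas : ∀ s : ℝ, Measurable fun X => d X s)
    (hdbd : ∀ s : ℝ, ∃ C : ℝ, ∀ X : M, ‖d X s‖ ≤ C)
    (S : M ≃ M) (hS : MeasurePreserving S ν ν) (hS' : MeasurePreserving S.symm ν ν)
    (τ : ℝ)
    (hcocycle : ∀ (X : M) (t : ℝ), d X (t + τ) = d X τ + d (S.symm X) t)
    (m : ℕ) (A : Fin m → Set M)
    (hAmeas : ∀ j, MeasurableSet (A j))
    (hAdisj : ∀ i j, i ≠ j → Disjoint (A i) (A j))
    (hAcover : (⋃ j, A j) = Set.univ)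
    (dj : Fin m → Fin n → ℝ)
    (hdj : ∀ j, ∀ X ∈ S '' A j, d X τ = dj j) :
    ∀ (t : ℝ) (a b : Fin n),
      (∑ j, (dj j a * (∫ X in A j, d X t b ∂ν)
              + (∫ X in A j, d X t a ∂ν) * dj j b
              + (ν (A j)).toReal * dj j a * dj j b))
        = (∫ X, d X (t + τ) a * d X (t + τ) b ∂ν)
            - ∫ X, d X t a * d X t b ∂ν := by
  intro t a b
  -- componentwise measurability and bounds
  have hma : ∀ (s : ℝ) (c : Fin n), Measurable fun X => d X s c :=
    fun s c => (measurable_pi_apply c).comp (hdmeas s)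
  have hbd : ∀ (s : ℝ) (c : Fin n), ∃ C : ℝ, ∀ X, |d X s c| ≤ C := by
    intro s c
    obtain ⟨C, h⟩ := hdbd s
    exact ⟨C, fun X => le_trans (by simpa using norm_le_pi_norm (d X s) c) (h X)⟩
  -- integrability helpers
  have hint : ∀ f : M → ℝ, Measurable f → (∃ C, ∀ x, |f x| ≤ C) → Integrable f ν := by
    rintro f hf ⟨C, hC⟩
    exact (integrable_const C).mono' hf.aestronglyMeasurable
      (Filter.Eventually.of_forall fun x => by simpa using hC x)
  have hbdmul : ∀ f g : M → ℝ, (∃ C, ∀ x, |f x| ≤ C) → (∃ C, ∀ x, |g x| ≤ C) →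
      ∃ C, ∀ x, |f x * g x| ≤ C := by
    rintro f g ⟨C, hC⟩ ⟨D, hD⟩
    refine ⟨C * D, fun x => ?_⟩
    calc |f x * g x| = |f x| * |g x| := abs_mul _ _
      _ ≤ C * D := mul_le_mul (hC x) (hD x) (abs_nonneg _) ((abs_nonneg _).trans (hC x))
  have hintmul : ∀ f g : M → ℝ, Measurable f → Measurable g →
      (∃ C, ∀ x, |f x| ≤ C) → (∃ C, ∀ x, |g x| ≤ C) →
      Integrable (fun x => f x * g x) ν := by
    intro f g hf hg hfb hgb
    exact hint _ (hf.mul hg) (hbdmul f g hfb hgb)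
  -- the pushed-forward jump `g Y = d (S Y) τ`
  set g : M → Fin n → ℝ := fun Y => d (S Y) τ with hg
  have hgmeas : ∀ c : Fin n, Measurable fun Y => g Y c :=
    fun c => (hma τ c).comp hS.measurable
  have hgbd : ∀ c : Fin n, ∃ C, ∀ Y, |g Y c| ≤ C := by
    intro c; obtain ⟨C, h⟩ := hbd τ c; exact ⟨C, fun Y => h (S Y)⟩
  -- measurable equivalence
  let e : M ≃ᵐ M :=
    { toEquiv := S, measurable_toFun := hS.measurable, measurable_invFun := hS'.measurable }
  -- change of variables
  have hchg : (∫ X, d X (t + τ) a * d X (t + τ) b ∂ν)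
      = ∫ Y, (g Y a + d Y t a) * (g Y b + d Y t b) ∂ν := by
    rw [← hS.integral_comp e.measurableEmbedding
      (fun X => d X (t + τ) a * d X (t + τ) b)]
    refine integral_congr_ae (Filter.Eventually.of_forall fun Y => ?_)
    have h1 : d (S Y) (t + τ) = d (S Y) τ + d Y t := by
      have := hcocycle (S Y) t
      simpa [Equiv.symm_apply_apply] using this
    simp [h1, hg]
  -- integrabilities
  have hIa : Integrable (fun Y => d Y t a) ν := hint _ (hma t a) (hbd t a)
  have hIb : Integrable (fun Y => d Y t b) ν := hint _ (hma t b) (hbd t b)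
  have hIdd : Integrable (fun Y => d Y t a * d Y t b) ν :=
    hintmul _ _ (hma t a) (hma t b) (hbd t a) (hbd t b)
  have hIgg : Integrable (fun Y => g Y a * g Y b) ν :=
    hintmul _ _ (hgmeas a) (hgmeas b) (hgbd a) (hgbd b)
  have hIgd : Integrable (fun Y => g Y a * d Y t b) ν :=
    hintmul _ _ (hgmeas a) (hma t b) (hgbd a) (hbd t b)
  have hIdg : Integrable (fun Y => d Y t a * g Y b) ν :=
    hintmul _ _ (hma t a) (hgmeas b) (hbd t a) (hgbd b)
  have hH : Integrable (fun Y => g Y a * g Y b + g Y a * d Y t b + d Y t a * g Y b) ν :=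
    (hIgg.add hIgd).add hIdg
  -- expand the product
  have hexp : (∫ Y, (g Y a + d Y t a) * (g Y b + d Y t b) ∂ν)
      = (∫ Y, g Y a * g Y b + g Y a * d Y t b + d Y t a * g Y b ∂ν)
        + ∫ Y, d Y t a * d Y t b ∂ν := by
    rw [← integral_add hH hIdd]
    refine integral_congr_ae (Filter.Eventually.of_forall fun Y => ?_)
    ring
  -- split the middle integral over the partition
  have hPd : Pairwise (Function.onFun Disjoint A) := fun i j hij => hAdisj i j hij
  have hsplit : (∫ Y, g Y a * g Y b + g Y a * d Y t b + d Y t a * g Y b ∂ν)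
      = ∑ j, ∫ Y in A j, g Y a * g Y b + g Y a * d Y t b + d Y t a * g Y b ∂ν := by
    have := integral_iUnion (μ := ν) hAmeas hPd (hH.integrableOn (s := ⋃ j, A j))
    rw [hAcover] at this
    simp only [Measure.restrict_univ] at this
    rw [this, tsum_fintype]
  -- compute each piece
  have hpiece : ∀ j, (∫ Y in A j, g Y a * g Y b + g Y a * d Y t b + d Y t a * g Y b ∂ν)
      = dj j a * (∫ X in A j, d X t b ∂ν) + (∫ X in A j, d X t a ∂ν) * dj j b
        + (ν (A j)).toReal * dj j a * dj j b := by
    intro j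
    have hcong : (∫ Y in A j, g Y a * g Y b + g Y a * d Y t b + d Y t a * g Y b ∂ν)
        = ∫ Y in A j, dj j a * dj j b + dj j a * d Y t b + d Y t a * dj j b ∂ν := by
      refine setIntegral_congr_fun (hAmeas j) fun Y hY => ?_
      have hgY : g Y = dj j := hdj j (S Y) ⟨Y, hY, rfl⟩
      simp [hgY]
    rw [hcong]
    have h1 : Integrable (fun Y => (dj j a * dj j b : ℝ)) (ν.restrict (A j)) :=
      integrable_const _
    have h2 : Integrable (fun Y => dj j a * d Y t b) (ν.restrict (A j)) :=
      (hIb.integrableOn.const_mul _)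
    have h3 : Integrable (fun Y => d Y t a * dj j b) (ν.restrict (A j)) :=
      (hIa.integrableOn.mul_const _)
    have e1 : (∫ Y in A j, (dj j a * dj j b + dj j a * d Y t b + d Y t a * dj j b) ∂ν)
        = (∫ Y in A j, (dj j a * dj j b + dj j a * d Y t b) ∂ν)
          + ∫ Y in A j, d Y t a * dj j b ∂ν := integral_add (h1.add h2) h3
    have e2 : (∫ Y in A j, (dj j a * dj j b + dj j a * d Y t b) ∂ν)
        = (∫ Y in A j, (dj j a * dj j b : ℝ) ∂ν)
          + ∫ Y in A j, dj j a * d Y t b ∂ν := integral_add h1 h2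
    rw [e1, e2, setIntegral_const, integral_mul_const, integral_const_mul, smul_eq_mul, measureReal_def]
    ring
  calc (∑ j, (dj j a * (∫ X in A j, d X t b ∂ν)
              + (∫ X in A j, d X t a ∂ν) * dj j b
              + (ν (A j)).toReal * dj j a * dj j b))
      = ∑ j, ∫ Y in A j, g Y a * g Y b + g Y a * d Y t b + d Y t a * g Y b ∂ν := by
        refine Finset.sum_congr rfl fun j _ => ?_
        rw [hpiece j]
    _ = (∫ X, d X (t + τ) a * d X (t + τ) b ∂ν) - ∫ X, d X t a * d X t b ∂ν := by
        rw [hchg, hexp, ← hsplit]; ring
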